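/- Let f : [a,b] → ℝ have absolutely continuous first derivative, let x ∈ [a, (a+b)/2], and let K be the kernel K(t) = t-a on [a,x], t-(a+b)/2 on (x, a+b-x], t-b on (a+b-x, b]. Then (1/(2(b-a)))∫_a^b K(t)(t - (a+b)/2) f''(t) dt = (1/(b-a))∫_a^b f(t) dt - (1/2)[(f(x)+f(a+b-x))/2 + (f(a)+f(b))/2] + (1/2)(x - (a+b)/2)·(f'(x)-f'(a+b-x))/2. -/

import Mathlib

open MeasureTheory Set Interval

lemma parts_aux (a b c d : ℝ) (hab : a ≤ b) (hcd : [[c, d]] ⊆ Icc a b)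
    (f f' f'' : ℝ → ℝ)
    (hf' : ∀ t ∈ Icc a b, HasDerivAt f (f' t) t)
    (hf'' : ∀ t ∈ Icc a b, HasDerivAt f' (f'' t) t)
    (hint : IntervalIntegrable f'' volume a b)
    (α β : ℝ) :
    ∫ t in c..d, (t - α) * (t - β) * f'' t
    = (d - α) * (d - β) * f' d - (c - α) * (c - β) * f' c
      - (((d - β) + (d - α)) * f d - ((c - β) + (c - α)) * f c)
      + 2 * ∫ t in c..d, f t := by
  have hsub : [[c, d]] ⊆ [[a, b]] := by rwa [uIcc_of_le hab]
  have hf''cd : IntervalIntegrable f'' volume c d := hint.mono_set hsub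
  have contf' : ContinuousOn f' [[c, d]] := fun t ht =>
    (hf'' t (hcd ht)).continuousAt.continuousWithinAt
  have contf : ContinuousOn f [[c, d]] := fun t ht =>
    (hf' t (hcd ht)).continuousAt.continuousWithinAt
  have hf'cd : IntervalIntegrable f' volume c d := contf'.intervalIntegrable
  have hfcd : IntervalIntegrable f volume c d := contf.intervalIntegrable
  have hu : ∀ t ∈ [[c, d]], HasDerivAt (fun t => (t - α) * (t - β)) ((t - β) + (t - α)) t := by
    intro t _
    have := ((hasDerivAt_id t).sub_const α).mul ((hasDerivAt_id t).sub_const β)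
    exact this.congr_deriv (by simp only [id]; ring)
  have hu' : IntervalIntegrable (fun t => (t - β) + (t - α)) volume c d :=
    (Continuous.add (by continuity) (by continuity)).intervalIntegrable _ _
  have h1 := intervalIntegral.integral_mul_deriv_eq_deriv_mul hu
    (fun t ht => hf'' t (hcd ht)) hu' hf''cd
  have hw : ∀ t ∈ [[c, d]], HasDerivAt (fun t => (t - β) + (t - α)) 2 t := by
    intro t _
    have := ((hasDerivAt_id t).sub_const β).add ((hasDerivAt_id t).sub_const α)
    exact this.congr_deriv (by norm_num)
  have hw' : IntervalIntegrable (fun _ : ℝ => (2 : ℝ)) volume c d :=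
    intervalIntegrable_const
  have h2 := intervalIntegral.integral_mul_deriv_eq_deriv_mul hw
    (fun t ht => hf' t (hcd ht)) hw' hf'cd
  rw [h1, h2]
  rw [intervalIntegral.integral_const_mul]
  ring

theorem second_order_kernel_identity
    (a b : ℝ) (hab : a < b) (x : ℝ) (hx : x ∈ Icc a ((a + b)/2))
    (f f' f'' : ℝ → ℝ)
    (hf' : ∀ t ∈ Icc a b, HasDerivAt f (f' t) t)
    (hf'' : ∀ t ∈ Icc a b, HasDerivAt f' (f'' t) t)
    (hint : IntervalIntegrable f'' volume a b)
    (K : ℝ → ℝ)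
    (hK : ∀ t, K t = if t ≤ x then t - a
                     else if t ≤ a + b - x then t - (a + b)/2
                     else t - b) :
    (1 / (2 * (b - a))) * ∫ t in a..b, K t * (t - (a + b)/2) * f'' t
    = (1 / (b - a)) * (∫ t in a..b, f t)
      - (1/2) * ((f x + f (a + b - x)) / 2 + (f a + f b) / 2)
      + (1/2) * (x - (a + b)/2) * ((f' x - f' (a + b - x)) / 2) := by
  obtain ⟨hax, hxm⟩ := hx
  set m : ℝ := (a + b) / 2 with hm
  set y : ℝ := a + b - x with hy
  have hmy : m ≤ y := by simp only [hm, hy]; linarith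
  have hyb : y ≤ b := by simp only [hy]; linarith
  have hxy : x ≤ y := le_trans hxm hmy
  have hxb : x ≤ b := le_trans hxy hyb
  have hay : a ≤ y := le_trans hax hxy
  have hab' : a ≤ b := hab.le
  -- subinterval inclusions
  have s1 : [[a, x]] ⊆ Icc a b := by
    rw [uIcc_of_le hax]; exact Icc_subset_Icc le_rfl hxb
  have s2 : [[x, y]] ⊆ Icc a b := by
    rw [uIcc_of_le hxy]; exact Icc_subset_Icc hax hyb
  have s3 : [[y, b]] ⊆ Icc a b := by
    rw [uIcc_of_le hyb]; exact Icc_subset_Icc hay le_rfl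
  -- pointwise identifications of the integrand on each piece
  have hK1 : EqOn (fun t => K t * (t - m) * f'' t)
      (fun t => (t - a) * (t - m) * f'' t) [[a, x]] := by
    intro t ht
    rw [uIcc_of_le hax] at ht
    simp only [hK t, if_pos ht.2]
  have hK2 : ∀ t ∈ Ι x y, K t * (t - m) * f'' t = (t - m) * (t - m) * f'' t := by
    intro t ht
    rw [uIoc_of_le hxy] at ht
    rw [hK t, if_neg (not_le.2 ht.1), if_pos ht.2]
  have hK3 : ∀ t ∈ Ι y b, K t * (t - m) * f'' t = (t - b) * (t - m) * f'' t := by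
    intro t ht
    rw [uIoc_of_le hyb] at ht
    have h1 : ¬ t ≤ x := not_le.2 (lt_of_le_of_lt hxy ht.1)
    have h2 : ¬ t ≤ a + b - x := not_le.2 ht.1
    rw [hK t, if_neg h1, if_neg h2]
  -- integrability of polynomial * f'' pieces
  have poly_int : ∀ (c d α : ℝ), [[c, d]] ⊆ Icc a b →
      IntervalIntegrable (fun t => (t - α) * (t - m) * f'' t) volume c d := by
    intro c d α hcd
    have hsub : [[c, d]] ⊆ [[a, b]] := by rwa [uIcc_of_le hab']
    exact (hint.mono_set hsub).continuousOn_mul (by fun_prop)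
  -- integrability of the kernel integrand on each piece
  have hi1 : IntervalIntegrable (fun t => K t * (t - m) * f'' t) volume a x := by
    rw [intervalIntegrable_iff]
    refine (intervalIntegrable_iff.1 (poly_int a x a s1)).congr_fun ?_ measurableSet_uIoc
    intro t ht
    rw [uIoc_of_le hax] at ht
    exact (hK1 (by rw [uIcc_of_le hax]; exact ⟨ht.1.le, ht.2⟩)).symm
  have hi2 : IntervalIntegrable (fun t => K t * (t - m) * f'' t) volume x y := by
    rw [intervalIntegrable_iff]
    exact (intervalIntegrable_iff.1 (poly_int x y m s2)).congr_fun
      (fun t ht => (hK2 t ht).symm) measurableSet_uIoc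
  have hi3 : IntervalIntegrable (fun t => K t * (t - m) * f'' t) volume y b := by
    rw [intervalIntegrable_iff]
    exact (intervalIntegrable_iff.1 (poly_int y b b s3)).congr_fun
      (fun t ht => (hK3 t ht).symm) measurableSet_uIoc
  -- split the kernel integral
  have hsplit : ∫ t in a..b, K t * (t - m) * f'' t
      = (∫ t in a..x, K t * (t - m) * f'' t) + (∫ t in x..y, K t * (t - m) * f'' t)
        + (∫ t in y..b, K t * (t - m) * f'' t) := by
    rw [intervalIntegral.integral_add_adjacent_intervals hi1 hi2,
      intervalIntegral.integral_add_adjacent_intervals (hi1.trans hi2) hi3]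
  -- split ∫ f
  have contf : ∀ (c d : ℝ), [[c, d]] ⊆ Icc a b → IntervalIntegrable f volume c d := by
    intro c d hcd
    exact (ContinuousOn.intervalIntegrable
      (fun t ht => (hf' t (hcd ht)).continuousAt.continuousWithinAt))
  have hfsplit : ∫ t in a..b, f t
      = (∫ t in a..x, f t) + (∫ t in x..y, f t) + (∫ t in y..b, f t) := by
    rw [intervalIntegral.integral_add_adjacent_intervals (contf a x s1) (contf x y s2),
      intervalIntegral.integral_add_adjacent_intervals ((contf a x s1).trans (contf x y s2))
      (contf y b s3)]
  -- evaluate the three pieces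
  have e1 : ∫ t in a..x, K t * (t - m) * f'' t = ∫ t in a..x, (t - a) * (t - m) * f'' t :=
    intervalIntegral.integral_congr hK1
  have e2 : ∫ t in x..y, K t * (t - m) * f'' t = ∫ t in x..y, (t - m) * (t - m) * f'' t :=
    intervalIntegral.integral_congr_ae (Filter.Eventually.of_forall hK2)
  have e3 : ∫ t in y..b, K t * (t - m) * f'' t = ∫ t in y..b, (t - b) * (t - m) * f'' t :=
    intervalIntegral.integral_congr_ae (Filter.Eventually.of_forall hK3)
  have p1 := parts_aux a b a x hab' s1 f f' f'' hf' hf'' hint a m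
  have p2 := parts_aux a b x y hab' s2 f f' f'' hf' hf'' hint m m
  have p3 := parts_aux a b y b hab' s3 f f' f'' hf' hf'' hint b m
  rw [hsplit, e1, e2, e3, p1, p2, p3, hfsplit]
  have hba : b - a ≠ 0 := sub_ne_zero.2 hab.ne'
  have hym : y - m = m - x := by simp only [hy, hm]; ring
  rw [hy, hm]
  field_simp
  ring_nf
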